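/- arXiv:1011.3736 — 4 statements merged into one kernel-verified Lean document; each statement's English description precedes it below -/
import Mathlib

section
/- Under Assumption ND, for every fixed A ≥ 0 the map P ↦ λ(S(A, P)) is monotone nondecreasing and continuous on ℝ. -/
open MeasureTheory Set Filter Topology

/-- Under Assumption ND, for every fixed `A ≥ 0` the map `P ↦ λ(S(A, P))` is monotone
nondecreasing and continuous on `ℝ`, where `S(A, P) = {ξ ∈ [0, ξmax] | b ξ + A * e ξ ≤ P}`. -/
theorem stmt_2 (ξmax : ℝ) (hξmax : 0 < ξmax) (b e : ℝ → ℝ)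
    (hb : ∀ ξ ∈ Icc (0:ℝ) ξmax, DifferentiableAt ℝ b ξ)
    (hb' : ContinuousOn (deriv b) (Icc (0:ℝ) ξmax))
    (hbpos : ∀ ξ ∈ Icc (0:ℝ) ξmax, 0 < deriv b ξ)
    (he : ∀ ξ ∈ Icc (0:ℝ) ξmax, DifferentiableAt ℝ e ξ)
    (he' : ContinuousOn (deriv e) (Icc (0:ℝ) ξmax))
    (hepos : ∀ ξ ∈ Icc (0:ℝ) ξmax, 0 < e ξ)
    (hND : ∀ A : ℝ, 0 ≤ A →
      volume {ξ ∈ Icc (0:ℝ) ξmax | deriv b ξ + A * deriv e ξ = 0} = 0)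
    (S : ℝ → ℝ → Set ℝ)
    (hS : ∀ A P, S A P = {ξ ∈ Icc (0:ℝ) ξmax | b ξ + A * e ξ ≤ P}) :
    ∀ A : ℝ, 0 ≤ A →
      Monotone (fun P : ℝ => (volume (S A P)).toReal) ∧
      Continuous (fun P : ℝ => (volume (S A P)).toReal) := by
  intro A hA
  set g : ℝ → ℝ := fun ξ => b ξ + A * e ξ with hg
  -- basic facts
  have hgd : ∀ ξ ∈ Icc (0:ℝ) ξmax, HasDerivAt g (deriv b ξ + A * deriv e ξ) ξ := by
    intro ξ hξ
    exact ((hb ξ hξ).hasDerivAt).add (((he ξ hξ).hasDerivAt).const_mul A)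
  have hgc : ContinuousOn g (Icc (0:ℝ) ξmax) := fun ξ hξ =>
    (hgd ξ hξ).continuousAt.continuousWithinAt
  have hSset : ∀ P, S A P = Icc (0:ℝ) ξmax ∩ g ⁻¹' (Iic P) := by
    intro P; rw [hS]; rfl
  have hsub : ∀ P, S A P ⊆ Icc (0:ℝ) ξmax := by
    intro P; rw [hSset]; exact inter_subset_left
  have hclosed : ∀ P, IsClosed (S A P) := by
    intro P
    rw [hSset]
    exact hgc.preimage_isClosed_of_isClosed isClosed_Icc isClosed_Iic
  have hmeas : ∀ P, MeasurableSet (S A P) := fun P => (hclosed P).measurableSet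
  have hfin : ∀ P, volume (S A P) ≠ ⊤ := by
    intro P
    exact ne_top_of_le_ne_top measure_Icc_lt_top.ne (measure_mono (hsub P))
  have hmonoset : ∀ {P Q : ℝ}, P ≤ Q → S A P ⊆ S A Q := by
    intro P Q h
    rw [hSset, hSset]
    exact inter_subset_inter_right _ (preimage_mono (Iic_subset_Iic.2 h))
  have hmono : Monotone (fun P : ℝ => (volume (S A P)).toReal) := fun P Q h =>
    ENNReal.toReal_mono (hfin Q) (measure_mono (hmonoset h))
  refine ⟨hmono, ?_⟩
  -- level sets are null
  have hlev : ∀ P : ℝ, volume {ξ ∈ Icc (0:ℝ) ξmax | g ξ = P} = 0 := by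
    intro P
    set Z : Set ℝ := {ξ ∈ Icc (0:ℝ) ξmax | deriv b ξ + A * deriv e ξ = 0} with hZ
    set D : Set ℝ := {ξ ∈ Icc (0:ℝ) ξmax | g ξ = P} \ Z with hD
    have hDcount : D.Countable := by
      rw [← Set.countable_coe_iff]
      have : DiscreteTopology D := by
        rw [discreteTopology_subtype_iff]
        intro ξ hξ
        obtain ⟨⟨hξI, hξP⟩, hξZ⟩ := hξ
        have hne : deriv b ξ + A * deriv e ξ ≠ 0 := fun h => hξZ ⟨hξI, h⟩
        have h1 : ∀ᶠ z in 𝓝[≠] ξ, g z ≠ g ξ := (hgd ξ hξI).eventually_ne hne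
        rw [inf_principal_eq_bot]
        refine Filter.mem_of_superset h1 ?_
        intro z hz hzD
        exact hz (by rw [hξP]; exact hzD.1.2)
      exact (TopologicalSpace.separableSpace_iff_countable).1 inferInstance
    have hsplit : {ξ ∈ Icc (0:ℝ) ξmax | g ξ = P} ⊆ D ∪ Z := by
      intro ξ hξ
      by_cases h : ξ ∈ Z
      · exact Or.inr h
      · exact Or.inl ⟨hξ, h⟩
    refine measure_mono_null hsplit ?_
    exact measure_union_null (hDcount.measure_zero volume) (hND A hA)
  -- continuity
  rw [continuous_iff_continuousAt]
  intro P0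
  -- right limit
  have hright : Tendsto (fun n : ℕ => volume (S A (P0 + 1 / (n + 1)))) atTop
      (𝓝 (volume (S A P0))) := by
    have hInter : ⋂ n : ℕ, S A (P0 + 1 / (n + 1)) = S A P0 := by
      ext x
      simp only [mem_iInter, hS, mem_setOf_eq, mem_sep_iff]
      constructor
      · intro h
        refine ⟨(h 0).1, le_of_forall_pos_le_add fun ε hε => ?_⟩
        obtain ⟨n, hn⟩ := exists_nat_one_div_lt hε
        exact le_trans (h n).2 (by linarith [hn])
      · intro h n
        refine ⟨h.1, le_trans h.2 ?_⟩
        have : (0:ℝ) < 1 / (n + 1) := by positivity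
        linarith
    have := tendsto_measure_iInter_atTop (μ := volume)
      (s := fun n : ℕ => S A (P0 + 1 / (n + 1)))
      (fun n => (hmeas _).nullMeasurableSet)
      (fun m n hmn => hmonoset (by
        have hc : (m:ℝ) ≤ n := Nat.cast_le.2 hmn
        have : (1:ℝ) / (n + 1) ≤ 1 / (m + 1) :=
          one_div_le_one_div_of_le (by positivity) (by linarith)
        linarith))
      ⟨0, hfin _⟩
    rwa [hInter] at this
  -- left limit
  have hleft : Tendsto (fun n : ℕ => volume (S A (P0 - 1 / (n + 1)))) atTop
      (𝓝 (volume (S A P0))) := by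
    have hUnion : ⋃ n : ℕ, S A (P0 - 1 / (n + 1)) = {ξ ∈ Icc (0:ℝ) ξmax | g ξ < P0} := by
      ext x
      simp only [mem_iUnion, hS, mem_setOf_eq, mem_sep_iff]
      constructor
      · rintro ⟨n, hxI, hxle⟩
        refine ⟨hxI, lt_of_le_of_lt hxle (by
          have : (0:ℝ) < 1 / (n + 1) := by positivity
          linarith)⟩
      · rintro ⟨hxI, hxlt⟩
        obtain ⟨n, hn⟩ := exists_nat_one_div_lt (sub_pos.2 hxlt)
        exact ⟨n, hxI, by linarith⟩
    have hUvol : volume {ξ ∈ Icc (0:ℝ) ξmax | g ξ < P0} = volume (S A P0) := by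
      apply le_antisymm
      · apply measure_mono
        intro x hx
        rw [hS]
        exact ⟨hx.1, hx.2.le⟩
      · have hsub2 : S A P0 ⊆ {ξ ∈ Icc (0:ℝ) ξmax | g ξ < P0} ∪
            {ξ ∈ Icc (0:ℝ) ξmax | g ξ = P0} := by
          intro x hx
          rw [hS] at hx
          rcases lt_or_eq_of_le hx.2 with h | h
          · exact Or.inl ⟨hx.1, h⟩
          · exact Or.inr ⟨hx.1, h⟩
        calc volume (S A P0) ≤ _ := measure_mono hsub2
          _ ≤ volume {ξ ∈ Icc (0:ℝ) ξmax | g ξ < P0} +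
              volume {ξ ∈ Icc (0:ℝ) ξmax | g ξ = P0} := measure_union_le _ _
          _ = volume {ξ ∈ Icc (0:ℝ) ξmax | g ξ < P0} := by rw [hlev P0, add_zero]
    have := tendsto_measure_iUnion_atTop (μ := volume)
      (s := fun n : ℕ => S A (P0 - 1 / (n + 1)))
      (fun m n hmn => hmonoset (by
        have hc : (m:ℝ) ≤ n := Nat.cast_le.2 hmn
        have : (1:ℝ) / (n + 1) ≤ 1 / (m + 1) :=
          one_div_le_one_div_of_le (by positivity) (by linarith)
        linarith))
    rwa [hUnion, hUvol] at this
  -- combine via ε-δ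
  set F : ℝ → ℝ := fun P => (volume (S A P)).toReal with hF
  have hrightR : Tendsto (fun n : ℕ => F (P0 + 1 / (n + 1))) atTop (𝓝 (F P0)) :=
    (ENNReal.tendsto_toReal (hfin P0)).comp hright
  have hleftR : Tendsto (fun n : ℕ => F (P0 - 1 / (n + 1))) atTop (𝓝 (F P0)) :=
    (ENNReal.tendsto_toReal (hfin P0)).comp hleft
  rw [Metric.continuousAt_iff]
  intro ε hε
  have h1 : ∀ᶠ n : ℕ in atTop, F (P0 + 1 / (n + 1)) < F P0 + ε :=
    hrightR.eventually (Filter.Tendsto.eventually_lt_const (by linarith) tendsto_id)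
  have h2 : ∀ᶠ n : ℕ in atTop, F P0 - ε < F (P0 - 1 / (n + 1)) :=
    hleftR.eventually (Filter.Tendsto.eventually_const_lt (by linarith) tendsto_id)
  obtain ⟨n, hn1, hn2⟩ := (h1.and h2).exists
  refine ⟨1 / (n + 1), by positivity, fun {P} hP => ?_⟩
  rw [Real.dist_eq] at hP ⊢
  rw [abs_sub_lt_iff] at hP ⊢
  constructor
  · have : F P ≤ F (P0 + 1 / (n + 1)) := hmono (by linarith [hP.1])
    linarith
  · have : F (P0 - 1 / (n + 1)) ≤ F P := hmono (by linarith [hP.2])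
    linarith
end

section
/- Under Assumption ND, for every fixed A ≥ 0 the map P ↦ λ(S(A, P)), restricted to the interval [m_A, M_A] with m_A := min_{ξ ∈ [0, ξ_max]} g(A, ξ) and M_A := max_{ξ ∈ [0, ξ_max]} g(A, ξ), is a bijection from [m_A, M_A] onto [0, ξ_max]; in particular λ(S(A, m_A)) = 0 and λ(S(A, M_A)) = ξ_max. -/
open MeasureTheory Set Filter Topology
open scoped ENNReal

/-- Under Assumption ND, for every fixed `A ≥ 0` the map `P ↦ λ(S(A, P))` restricted to
`[m_A, M_A]` is a bijection onto `[0, ξmax]`; in particular `λ(S(A, m_A)) = 0` and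
`λ(S(A, M_A)) = ξmax`. -/
theorem stmt_4 (ξmax : ℝ) (hξmax : 0 < ξmax) (b e : ℝ → ℝ)
    (hb : ∀ ξ ∈ Icc (0:ℝ) ξmax, DifferentiableAt ℝ b ξ)
    (hb' : ContinuousOn (deriv b) (Icc (0:ℝ) ξmax))
    (hbpos : ∀ ξ ∈ Icc (0:ℝ) ξmax, 0 < deriv b ξ)
    (he : ∀ ξ ∈ Icc (0:ℝ) ξmax, DifferentiableAt ℝ e ξ)
    (he' : ContinuousOn (deriv e) (Icc (0:ℝ) ξmax))
    (hepos : ∀ ξ ∈ Icc (0:ℝ) ξmax, 0 < e ξ)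
    (hND : ∀ A : ℝ, 0 ≤ A →
      volume {ξ ∈ Icc (0:ℝ) ξmax | deriv b ξ + A * deriv e ξ = 0} = 0)
    (S : ℝ → ℝ → Set ℝ)
    (hS : ∀ A P, S A P = {ξ ∈ Icc (0:ℝ) ξmax | b ξ + A * e ξ ≤ P}) :
    ∀ A : ℝ, 0 ≤ A →
      Set.BijOn (fun P : ℝ => (volume (S A P)).toReal)
        (Icc (sInf ((fun ξ => b ξ + A * e ξ) '' Icc (0:ℝ) ξmax))
             (sSup ((fun ξ => b ξ + A * e ξ) '' Icc (0:ℝ) ξmax)))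
        (Icc (0:ℝ) ξmax) ∧
      (volume (S A (sInf ((fun ξ => b ξ + A * e ξ) '' Icc (0:ℝ) ξmax)))).toReal = 0 ∧
      (volume (S A (sSup ((fun ξ => b ξ + A * e ξ) '' Icc (0:ℝ) ξmax)))).toReal = ξmax := by
  intro A hA
  set g : ℝ → ℝ := fun ξ => b ξ + A * e ξ with hg
  set m := sInf (g '' Icc (0:ℝ) ξmax) with hm
  set M := sSup (g '' Icc (0:ℝ) ξmax) with hM
  set F : ℝ → ℝ := fun P => (volume (S A P)).toReal with hF
  -- continuity of g
  have hgc : ContinuousOn g (Icc (0:ℝ) ξmax) := fun ξ hξ =>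
    ((hb ξ hξ).continuousAt.add (continuousAt_const.mul (he ξ hξ).continuousAt)).continuousWithinAt
  -- derivative of g
  have hgd : ∀ ξ ∈ Icc (0:ℝ) ξmax, HasDerivAt g (deriv b ξ + A * deriv e ξ) ξ := fun ξ hξ =>
    (hb ξ hξ).hasDerivAt.add ((he ξ hξ).hasDerivAt.const_mul A)
  have hS' : ∀ P, S A P = Icc (0:ℝ) ξmax ∩ g ⁻¹' Iic P := by
    intro P; rw [hS]; rfl
  have hSsub : ∀ P, S A P ⊆ Icc (0:ℝ) ξmax := fun P => by
    rw [hS']; exact inter_subset_left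
  have hSc : ∀ P, MeasurableSet (S A P) := fun P => by
    rw [hS']
    exact (hgc.preimage_isClosed_of_isClosed isClosed_Icc isClosed_Iic).measurableSet
  have hvolIcc : volume (Icc (0:ℝ) ξmax) = ENNReal.ofReal ξmax := by
    rw [Real.volume_Icc]; ring_nf
  have hfin : ∀ P, volume (S A P) ≠ ⊤ := fun P =>
    ((measure_mono (hSsub P)).trans_lt (by rw [hvolIcc]; exact ENNReal.ofReal_lt_top)).ne
  -- level sets are null
  have hnull : ∀ P : ℝ, volume {ξ | ξ ∈ Icc (0:ℝ) ξmax ∧ g ξ = P} = 0 := by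
    intro P
    set D := {ξ | ξ ∈ Icc (0:ℝ) ξmax ∧ g ξ = P ∧ deriv b ξ + A * deriv e ξ ≠ 0} with hD
    have hsub : {ξ | ξ ∈ Icc (0:ℝ) ξmax ∧ g ξ = P} ⊆
        {ξ ∈ Icc (0:ℝ) ξmax | deriv b ξ + A * deriv e ξ = 0} ∪ D := by
      rintro ξ ⟨h1, h2⟩
      by_cases h : deriv b ξ + A * deriv e ξ = 0
      · exact Or.inl ⟨h1, h⟩
      · exact Or.inr ⟨h1, h2, h⟩
    have hDc : D.Countable := by
      have hdisc : DiscreteTopology (↥D) := by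
        rw [discreteTopology_subtype_iff]
        intro x hx
        rw [Filter.inf_principal_eq_bot]
        filter_upwards [(hgd x hx.1).eventually_ne hx.2.2] with y hy hyD
        exact hy (hyD.2.1.trans hx.2.1.symm)
      have : Countable (↥D) := TopologicalSpace.separableSpace_iff_countable.mp inferInstance
      exact countable_coe_iff.mp this
    refine le_antisymm ?_ zero_le
    calc volume {ξ | ξ ∈ Icc (0:ℝ) ξmax ∧ g ξ = P}
        ≤ volume ({ξ ∈ Icc (0:ℝ) ξmax | deriv b ξ + A * deriv e ξ = 0} ∪ D) :=
          measure_mono hsub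
      _ ≤ volume {ξ ∈ Icc (0:ℝ) ξmax | deriv b ξ + A * deriv e ξ = 0} + volume D :=
          measure_union_le _ _
      _ = 0 := by rw [hND A hA, hDc.measure_zero]; simp
  -- monotonicity
  have hmono : ∀ {P Q : ℝ}, P ≤ Q → S A P ⊆ S A Q := by
    intro P Q h
    rw [hS' P, hS' Q]
    exact inter_subset_inter_right _ (preimage_mono (Iic_subset_Iic.2 h))
  have Fmono : Monotone F := fun P Q h =>
    ENNReal.toReal_mono (hfin Q) (measure_mono (hmono h))
  -- continuity of F
  have hFc : Continuous F := by
    rw [continuous_iff_continuousAt]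
    intro P
    have key : Tendsto (fun Q => volume (S A Q)) (𝓝 P) (𝓝 (volume (S A P))) := by
      rw [tendsto_iff_seq_tendsto]
      intro u hu
      have hvol : ∀ Q, volume (S A Q) = ∫⁻ ξ, (S A Q).indicator (1 : ℝ → ℝ≥0∞) ξ := fun Q =>
        (lintegral_indicator_one (hSc Q)).symm
      simp only [Function.comp, hvol]
      refine tendsto_lintegral_of_dominated_convergence
        ((Icc (0:ℝ) ξmax).indicator (1 : ℝ → ℝ≥0∞))
        (fun n => measurable_const.indicator (hSc (u n)))
        (fun n => ae_of_all _ fun ξ =>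
          Set.indicator_le_indicator_of_subset (hSsub _) (fun _ => zero_le) ξ) ?_ ?_
      · rw [lintegral_indicator_one measurableSet_Icc, hvolIcc]
        exact ENNReal.ofReal_ne_top
      · filter_upwards [(measure_eq_zero_iff_ae_notMem (μ := volume)).mp (hnull P)] with ξ hξ
        by_cases hIξ : ξ ∈ Icc (0:ℝ) ξmax
        · have hne : g ξ ≠ P := fun h => hξ ⟨hIξ, h⟩
          rcases hne.lt_or_gt with hlt | hgt
          · have h1 : (S A P).indicator (1 : ℝ → ℝ≥0∞) ξ = 1 :=
              indicator_of_mem (by rw [hS']; exact ⟨hIξ, hlt.le⟩) _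
            rw [h1]
            refine Tendsto.congr' ?_ tendsto_const_nhds
            filter_upwards [hu.eventually (eventually_gt_nhds hlt)] with n hn
            exact (indicator_of_mem (show ξ ∈ S A (u n) by rw [hS']; exact ⟨hIξ, hn.le⟩) (1 : ℝ → ℝ≥0∞)).symm
          · have h1 : (S A P).indicator (1 : ℝ → ℝ≥0∞) ξ = 0 :=
              indicator_of_notMem (by rw [hS']; exact fun h => absurd h.2 (not_le.2 hgt)) _
            rw [h1]
            refine Tendsto.congr' ?_ tendsto_const_nhds
            filter_upwards [hu.eventually (eventually_lt_nhds hgt)] with n hn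
            exact (indicator_of_notMem
              (show ξ ∉ S A (u n) by rw [hS']; exact fun h => absurd h.2 (not_le.2 hn)) (1 : ℝ → ℝ≥0∞)).symm
        · have h1 : (S A P).indicator (1 : ℝ → ℝ≥0∞) ξ = 0 :=
            indicator_of_notMem (fun h => hIξ (hSsub _ h)) _
          rw [h1]
          refine Tendsto.congr' ?_ tendsto_const_nhds
          exact Eventually.of_forall fun n =>
            (indicator_of_notMem (show ξ ∉ S A (u n) from fun h => hIξ (hSsub _ h)) (1 : ℝ → ℝ≥0∞)).symm
    exact (ENNReal.tendsto_toReal (hfin P)).comp key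
  -- endpoint values
  have hmM : m ≤ M := csInf_le_csSup
    ((nonempty_Icc.2 hξmax.le).image g)
    (isCompact_Icc.image_of_continuousOn hgc).bddBelow
    (isCompact_Icc.image_of_continuousOn hgc).bddAbove
  have hSm : volume (S A m) = 0 := by
    refine measure_mono_null ?_ (hnull m)
    intro ξ hξ
    rw [hS'] at hξ
    exact ⟨hξ.1, le_antisymm hξ.2 (hgc.sInf_image_Icc_le hξ.1)⟩
  have hFm : F m = 0 := by rw [hF]; simp [hSm]
  have hSM : S A M = Icc (0:ℝ) ξmax := by
    rw [hS']
    refine Set.eq_of_subset_of_subset inter_subset_left fun ξ hξ => ⟨hξ, ?_⟩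
    exact hgc.le_sSup_image_Icc hξ
  have hFM : F M = ξmax := by
    rw [hF]; simp only [hSM, hvolIcc]; exact ENNReal.toReal_ofReal hξmax.le
  -- strict monotonicity on [m, M]
  have hstrict : StrictMonoOn F (Icc m M) := by
    intro P hP Q hQ hPQ
    have hcmem : (P + Q) / 2 ∈ Icc m M := ⟨le_trans hP.1 (by linarith), le_trans (by linarith) hQ.2⟩
    have himg : g '' Icc (0:ℝ) ξmax = Icc m M := hgc.image_Icc hξmax.le
    obtain ⟨ξ0, hξ0I, hgξ0⟩ : ∃ ξ0 ∈ Icc (0:ℝ) ξmax, g ξ0 = (P + Q) / 2 := by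
      have := himg ▸ hcmem
      exact this
    have hcw : ∀ᶠ ξ in 𝓝[Icc (0:ℝ) ξmax] ξ0, g ξ ∈ Ioo P Q := by
      refine (hgc ξ0 hξ0I) (Ioo_mem_nhds ?_ ?_) <;> rw [hgξ0] <;> linarith
    rw [Filter.eventually_iff, mem_nhdsWithin] at hcw
    obtain ⟨U, hUo, hξ0U, hU⟩ := hcw
    obtain ⟨δ, hδ, hball⟩ := Metric.isOpen_iff.mp hUo ξ0 hξ0U
    set a := max 0 (ξ0 - δ) with ha
    set c := min ξmax (ξ0 + δ) with hc
    have hac : a < c := by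
      apply max_lt <;> apply lt_min
      · exact hξmax
      · linarith [hξ0I.1]
      · linarith [hξ0I.2]
      · linarith
    have hTsub : Ioo a c ⊆ U ∩ Icc (0:ℝ) ξmax := by
      intro x hx
      have h1 : x ∈ Icc (0:ℝ) ξmax :=
        ⟨(le_max_left 0 _).trans hx.1.le, hx.2.le.trans (min_le_left _ _)⟩
      refine ⟨hball ?_, h1⟩
      rw [Real.ball_eq_Ioo]
      exact ⟨lt_of_le_of_lt (le_max_right 0 _) hx.1, lt_of_lt_of_le hx.2 (min_le_right _ _)⟩
    have hTQ : Ioo a c ⊆ S A Q := by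
      intro x hx
      have hxU := hTsub hx
      have hgx : g x ∈ Ioo P Q := hU ⟨hxU.1, hxU.2⟩
      rw [hS']
      exact ⟨hxU.2, hgx.2.le⟩
    have hTP : Disjoint (S A P) (Ioo a c) := by
      rw [Set.disjoint_right]
      intro x hx hxP
      rw [hS'] at hxP
      exact absurd hxP.2 (not_le.2 (hU (hTsub hx)).1)
    have hvlt : volume (S A P) < volume (S A Q) := by
      have hun : volume (S A P) + volume (Ioo a c) ≤ volume (S A Q) := by
        rw [← measure_union hTP measurableSet_Ioo]
        exact measure_mono (union_subset (hmono hPQ.le) hTQ)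
      have hpos : 0 < volume (Ioo a c) := by
        rw [Real.volume_Ioo]
        exact ENNReal.ofReal_pos.2 (by linarith)
      calc volume (S A P) < volume (S A P) + volume (Ioo a c) :=
            ENNReal.lt_add_right (hfin P) hpos.ne'
        _ ≤ volume (S A Q) := hun
    exact ENNReal.toReal_lt_toReal (hfin P) (hfin Q) |>.mpr hvlt
  have hFm' : (volume (S A m)).toReal = F m := rfl
  have hFM' : (volume (S A M)).toReal = F M := rfl
  refine ⟨⟨fun P hP => ⟨hFm ▸ Fmono hP.1, hFM ▸ Fmono hP.2⟩, hstrict.injOn, ?_⟩,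
    hFm' ▸ hFm, hFM' ▸ hFM⟩
  have hsurj := intermediate_value_Icc hmM hFc.continuousOn
  rw [hFm, hFM] at hsurj
  exact hsurj
end

section
/- (Lemma L.2(i)) Under Assumption ND, for every fixed D ∈ [0, ξ_max] the map A ↦ μ_e(A, D) is non-increasing on [0, ∞): if 0 ≤ A₁ < A₂ then μ_e(A₂, D) ≤ μ_e(A₁, D). -/
open MeasureTheory Set Filter Topology

lemma my_countable_isolated {K : Set ℝ} (h : ∀ x ∈ K, ∃ U ∈ 𝓝 x, K ∩ U ⊆ {x}) :
    K.Countable := by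
  obtain ⟨bs, hbc, -, hbasis⟩ := TopologicalSpace.exists_countable_basis ℝ
  have h2 : ∀ x ∈ K, ∃ V ∈ bs, x ∈ V ∧ K ∩ V ⊆ {x} := by
    intro x hx
    obtain ⟨U, hU, hKU⟩ := h x hx
    obtain ⟨V, hVb, hxV, hVU⟩ := hbasis.mem_nhds_iff.mp hU
    exact ⟨V, hVb, hxV, fun y hy => hKU ⟨hy.1, hVU hy.2⟩⟩
  choose! V hVb hxV hKV using h2
  refine countable_of_injective_of_countable_image (f := V) ?_ (hbc.mono ?_)
  · intro x hx y hy hxy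
    have : x ∈ K ∩ V y := ⟨hx, hxy ▸ hxV x hx⟩
    exact hKV y hy this
  · rintro _ ⟨x, hx, rfl⟩
    exact hVb x hx

lemma my_level_null {g : ℝ → ℝ} {s : Set ℝ}
    (hg : ∀ ξ ∈ s, DifferentiableAt ℝ g ξ)
    (h0 : volume {ξ ∈ s | deriv g ξ = 0} = 0) (P : ℝ) :
    volume {ξ ∈ s | g ξ = P} = 0 := by
  set K : Set ℝ := {ξ ∈ s | g ξ = P ∧ deriv g ξ ≠ 0} with hK
  have hsub : {ξ ∈ s | g ξ = P} ⊆ {ξ ∈ s | deriv g ξ = 0} ∪ K := by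
    intro x hx
    by_cases hd : deriv g x = 0
    · exact Or.inl ⟨hx.1, hd⟩
    · exact Or.inr ⟨hx.1, hx.2, hd⟩
  have hKc : K.Countable := by
    apply my_countable_isolated
    intro x hx
    have hev := ((hg x hx.1).hasDerivAt.eventually_ne (c := g x) hx.2.2)
    rw [eventually_nhdsWithin_iff] at hev
    obtain ⟨U, hU, hUx⟩ := eventually_iff_exists_mem.mp hev
    refine ⟨U, hU, fun y hy => ?_⟩
    by_contra hne
    have hyx : y ≠ x := hne
    have := hUx y hy.2 hyx
    rw [hy.1.2.1, hx.2.1] at this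
    exact this rfl
  refine measure_mono_null hsub ?_
  refine le_antisymm ?_ zero_le
  calc volume ({ξ ∈ s | deriv g ξ = 0} ∪ K) ≤ volume {ξ ∈ s | deriv g ξ = 0} + volume K :=
        measure_union_le _ _
    _ = 0 := by rw [h0, hKc.measure_zero]; simp

lemma my_vol_eq {ξmax D : ℝ} (hξmax : 0 < ξmax) {g : ℝ → ℝ}
    (hgc : ContinuousOn g (Icc 0 ξmax))
    (hlev : ∀ P : ℝ, volume {ξ ∈ Icc (0:ℝ) ξmax | g ξ = P} = 0)
    (hD : D ∈ Icc (0:ℝ) ξmax) (hDpos : 0 < D) :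
    volume {ξ ∈ Icc (0:ℝ) ξmax | g ξ ≤
      sInf {P : ℝ | D ≤ (volume {ξ ∈ Icc (0:ℝ) ξmax | g ξ ≤ P}).toReal}} =
      ENNReal.ofReal D := by
  set SS : ℝ → Set ℝ := fun P => {ξ ∈ Icc (0:ℝ) ξmax | g ξ ≤ P} with hSS
  have hclosed : ∀ P, IsClosed (SS P) := fun P =>
    hgc.preimage_isClosed_of_isClosed isClosed_Icc isClosed_Iic
  have hmeas : ∀ P, MeasurableSet (SS P) := fun P => (hclosed P).measurableSet
  have hsubI : ∀ P, SS P ⊆ Icc (0:ℝ) ξmax := fun P x hx => hx.1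
  have hfin : ∀ P, volume (SS P) ≠ ⊤ := by
    intro P
    have : volume (SS P) ≤ volume (Icc (0:ℝ) ξmax) := measure_mono (hsubI P)
    rw [Real.volume_Icc] at this
    exact (this.trans_lt ENNReal.ofReal_lt_top).ne
  have hmono : ∀ {P Q : ℝ}, P ≤ Q → SS P ⊆ SS Q := fun {P Q} h x hx => ⟨hx.1, hx.2.trans h⟩
  set T : Set ℝ := {P : ℝ | D ≤ (volume (SS P)).toReal} with hT
  have hIccne : (Icc (0:ℝ) ξmax).Nonempty := ⟨0, le_refl 0, hξmax.le⟩
  obtain ⟨ξM, hξM, hM⟩ := isCompact_Icc.exists_isMaxOn hIccne hgc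
  have hTne : T.Nonempty := by
    refine ⟨g ξM, ?_⟩
    have hall : SS (g ξM) = Icc (0:ℝ) ξmax := by
      apply Subset.antisymm (hsubI _)
      intro x hx; exact ⟨hx, hM hx⟩
    simp only [hT, mem_setOf_eq, hall, Real.volume_Icc, sub_zero,
      ENNReal.toReal_ofReal hξmax.le]
    exact hD.2
  obtain ⟨ξm, hξm, hm⟩ := isCompact_Icc.exists_isMinOn hIccne hgc
  have hTbdd : BddBelow T := by
    refine ⟨g ξm, fun P hP => ?_⟩
    by_contra hlt
    push_neg at hlt
    have hempty : SS P = ∅ := by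
      ext x
      simp only [hSS, mem_setOf_eq, mem_empty_iff_false, iff_false]
      rintro ⟨hx, hgx⟩
      exact absurd (le_trans (hm hx) hgx) (not_le.mpr hlt)
    rw [hT, mem_setOf_eq, hempty] at hP
    simp at hP
    linarith
  set B := sInf T with hBdef
  have hupper : volume (SS B) ≤ ENNReal.ofReal D := by
    have hsplit : SS B ⊆ {ξ ∈ Icc (0:ℝ) ξmax | g ξ < B} ∪ {ξ ∈ Icc (0:ℝ) ξmax | g ξ = B} := by
      rintro x ⟨hx, hgx⟩
      rcases lt_or_eq_of_le hgx with h | h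
      · exact Or.inl ⟨hx, h⟩
      · exact Or.inr ⟨hx, h⟩
    have hlt : volume {ξ ∈ Icc (0:ℝ) ξmax | g ξ < B} ≤ ENNReal.ofReal D := by
      have hUeq : {ξ ∈ Icc (0:ℝ) ξmax | g ξ < B} = ⋃ n : ℕ, SS (B - 1 / (n + 1)) := by
        ext x
        simp only [mem_setOf_eq, mem_iUnion, hSS]
        constructor
        · rintro ⟨hx, hgx⟩
          obtain ⟨n, hn⟩ := exists_nat_one_div_lt (sub_pos.mpr hgx)
          exact ⟨n, hx, by linarith⟩
        · rintro ⟨n, hx, hgx⟩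
          have : (0:ℝ) < 1 / (n + 1) := by positivity
          exact ⟨hx, by linarith⟩
      have hmon : Monotone (fun n : ℕ => SS (B - 1 / (n + 1))) := by
        intro i j hij
        apply hmono
        have : (1:ℝ) / (j + 1) ≤ 1 / (i + 1) := by
          apply one_div_le_one_div_of_le (by positivity)
          exact_mod_cast by omega
        linarith
      rw [hUeq, hmon.measure_iUnion]
      refine iSup_le fun n => ?_
      have hnotT : B - 1 / (n + 1) ∉ T := by
        intro hmem
        have := csInf_le hTbdd hmem
        have hpos : (0:ℝ) < 1 / (n + 1) := by positivity
        rw [← hBdef] at this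
        linarith
      rw [hT, mem_setOf_eq, not_le] at hnotT
      exact le_of_lt ((ENNReal.lt_ofReal_iff_toReal_lt (hfin _)).mpr hnotT)
    calc volume (SS B) ≤ volume ({ξ ∈ Icc (0:ℝ) ξmax | g ξ < B} ∪
          {ξ ∈ Icc (0:ℝ) ξmax | g ξ = B}) := measure_mono hsplit
      _ ≤ volume {ξ ∈ Icc (0:ℝ) ξmax | g ξ < B} +
          volume {ξ ∈ Icc (0:ℝ) ξmax | g ξ = B} := measure_union_le _ _
      _ ≤ ENNReal.ofReal D + 0 := add_le_add hlt (le_of_eq (hlev B))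
      _ = ENNReal.ofReal D := by simp
  have hlower : ENNReal.ofReal D ≤ volume (SS B) := by
    have hIeq : SS B = ⋂ n : ℕ, SS (B + 1 / (n + 1)) := by
      ext x
      simp only [mem_iInter, hSS, mem_setOf_eq]
      constructor
      · rintro ⟨hx, hgx⟩ n
        have : (0:ℝ) < 1 / (n + 1) := by positivity
        exact ⟨hx, by linarith⟩
      · intro hall
        refine ⟨(hall 0).1, ?_⟩
        by_contra hgt
        push_neg at hgt
        obtain ⟨n, hn⟩ := exists_nat_one_div_lt (sub_pos.mpr hgt)
        have := (hall n).2
        linarith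
    have hant : Antitone (fun n : ℕ => SS (B + 1 / (n + 1))) := by
      intro i j hij
      apply hmono
      have : (1:ℝ) / (j + 1) ≤ 1 / (i + 1) := by
        apply one_div_le_one_div_of_le (by positivity)
        exact_mod_cast by omega
      linarith
    rw [hIeq, hant.measure_iInter (fun n => (hmeas _).nullMeasurableSet) ⟨0, hfin _⟩]
    refine le_iInf fun n => ?_
    have hlt : B < B + 1 / (n + 1) := by
      have : (0:ℝ) < 1 / (n + 1) := by positivity
      linarith
    obtain ⟨P, hPT, hPlt⟩ := exists_lt_of_csInf_lt hTne (hBdef ▸ hlt)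
    calc ENNReal.ofReal D ≤ volume (SS P) :=
          ENNReal.ofReal_le_of_le_toReal hPT
      _ ≤ volume (SS (B + 1 / (n + 1))) := measure_mono (hmono hPlt.le)
  exact le_antisymm hupper hlower

/-- (Lemma L.2(i)) Under Assumption ND, for every fixed `D ∈ [0, ξmax]` the map `A ↦ μ_e(A, D)`
is non-increasing on `[0, ∞)`. -/
theorem stmt_9 (ξmax : ℝ) (hξmax : 0 < ξmax) (κ : ℝ) (hκ : 0 < κ) (b e : ℝ → ℝ)
    (hb : ∀ ξ ∈ Icc (0:ℝ) ξmax, DifferentiableAt ℝ b ξ)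
    (hb' : ContinuousOn (deriv b) (Icc (0:ℝ) ξmax))
    (hbpos : ∀ ξ ∈ Icc (0:ℝ) ξmax, 0 < deriv b ξ)
    (he : ∀ ξ ∈ Icc (0:ℝ) ξmax, DifferentiableAt ℝ e ξ)
    (he' : ContinuousOn (deriv e) (Icc (0:ℝ) ξmax))
    (hepos : ∀ ξ ∈ Icc (0:ℝ) ξmax, 0 < e ξ)
    (hND : ∀ A : ℝ, 0 ≤ A →
      volume {ξ ∈ Icc (0:ℝ) ξmax | deriv b ξ + A * deriv e ξ = 0} = 0)
    (S : ℝ → ℝ → Set ℝ)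
    (hS : ∀ A P, S A P = {ξ ∈ Icc (0:ℝ) ξmax | b ξ + A * e ξ ≤ P})
    (B : ℝ → ℝ → ℝ)
    (hB : ∀ A D, B A D = sInf {P : ℝ | D ≤ (volume (S A P)).toReal})
    (Sp : ℝ → ℝ → Set ℝ)
    (hSp : ∀ A D, Sp A D = S A (B A D))
    (μe : ℝ → ℝ → ℝ)
    (hμe : ∀ A D, μe A D = κ * ∫ ξ in Sp A D, e ξ) :
    ∀ D ∈ Icc (0:ℝ) ξmax, ∀ A₁ A₂ : ℝ, 0 ≤ A₁ → A₁ < A₂ →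
      μe A₂ D ≤ μe A₁ D := by
  intro D hD A₁ A₂ hA₁ hA₁₂
  have hA₂ : 0 ≤ A₂ := hA₁.trans hA₁₂.le
  -- basic facts about S A P
  have hgdiff : ∀ (A : ℝ), ∀ ξ ∈ Icc (0:ℝ) ξmax,
      DifferentiableAt ℝ (fun x => b x + A * e x) ξ :=
    fun A ξ hξ => (hb ξ hξ).add ((he ξ hξ).const_mul A)
  have hgcont : ∀ (A : ℝ), ContinuousOn (fun ξ => b ξ + A * e ξ) (Icc (0:ℝ) ξmax) :=
    fun A ξ hξ => (hgdiff A ξ hξ).continuousAt.continuousWithinAt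
  have hecont : ContinuousOn e (Icc (0:ℝ) ξmax) :=
    fun ξ hξ => (he ξ hξ).continuousAt.continuousWithinAt
  have hsubI : ∀ A P, S A P ⊆ Icc (0:ℝ) ξmax := by
    intro A P x hx; rw [hS] at hx; exact hx.1
  have hclosed : ∀ A P, IsClosed (S A P) := by
    intro A P; rw [hS]
    exact (hgcont A).preimage_isClosed_of_isClosed isClosed_Icc isClosed_Iic
  have hmeasS : ∀ A P, MeasurableSet (S A P) := fun A P => (hclosed A P).measurableSet
  have hcompS : ∀ A P, IsCompact (S A P) :=
    fun A P => isCompact_Icc.of_isClosed_subset (hclosed A P) (hsubI A P)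
  have hIntS : ∀ A P, IntegrableOn e (S A P) volume :=
    fun A P => ((hecont.mono (hsubI A P)).integrableOn_compact (hcompS A P))
  have hfinS : ∀ A P, volume (S A P) ≠ ⊤ := by
    intro A P
    have : volume (S A P) ≤ volume (Icc (0:ℝ) ξmax) := measure_mono (hsubI A P)
    rw [Real.volume_Icc] at this
    exact (this.trans_lt ENNReal.ofReal_lt_top).ne
  rcases eq_or_lt_of_le hD.1 with hD0 | hDpos
  · -- case D = 0 : then B A 0 = 0 for every A, and S A₂ 0 ⊆ S A₁ 0
    subst hD0
    have hB0 : ∀ A : ℝ, B A 0 = 0 := by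
      intro A
      rw [hB]
      have huniv : {P : ℝ | (0:ℝ) ≤ (volume (S A P)).toReal} = univ :=
        eq_univ_of_forall fun P => ENNReal.toReal_nonneg
      rw [huniv]
      apply Real.sInf_of_not_bddBelow
      rintro ⟨x, hx⟩
      have := hx (mem_univ (x - 1))
      linarith
    have hsub : Sp A₂ 0 ⊆ Sp A₁ 0 := by
      rw [hSp, hSp, hB0, hB0, hS, hS]
      rintro x ⟨hx, hgx⟩
      refine ⟨hx, ?_⟩
      have hex := hepos x hx
      nlinarith
    rw [hμe, hμe]
    refine mul_le_mul_of_nonneg_left ?_ hκ.le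
    have h1 : Sp A₁ 0 = S A₁ 0 := by rw [hSp, hB0]
    have h2 : Sp A₂ 0 = S A₂ 0 := by rw [hSp, hB0]
    rw [h1, h2]
    refine setIntegral_mono_set (hIntS A₁ 0) ?_ (HasSubset.Subset.eventuallyLE (h1 ▸ h2 ▸ hsub))
    rw [EventuallyLE, ae_restrict_iff' (hmeasS A₁ 0)]
    exact ae_of_all _ fun x hx => (hepos x (hsubI A₁ 0 hx)).le
  · -- case 0 < D
    have hlev : ∀ A : ℝ, 0 ≤ A → ∀ P : ℝ,
        volume {ξ ∈ Icc (0:ℝ) ξmax | b ξ + A * e ξ = P} = 0 := by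
      intro A hA P
      apply my_level_null (g := fun x => b x + A * e x) (hgdiff A)
      have hset : {ξ ∈ Icc (0:ℝ) ξmax | deriv (fun x => b x + A * e x) ξ = 0} =
          {ξ ∈ Icc (0:ℝ) ξmax | deriv b ξ + A * deriv e ξ = 0} := by
        ext ξ
        simp only [mem_setOf_eq, and_congr_right_iff]
        intro hξ
        rw [show (fun x => b x + A * e x) = b + fun y => A * e y from rfl,
          ((hb ξ hξ).hasDerivAt.add ((he ξ hξ).hasDerivAt.const_mul A)).deriv]
      rw [hset]
      exact hND A hA
    have hvol : ∀ A : ℝ, 0 ≤ A → volume (Sp A D) = ENNReal.ofReal D := by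
      intro A hA
      have key := my_vol_eq hξmax (hgcont A) (hlev A hA) hD hDpos
      rw [hSp, hB, hS]
      simp only [hS]
      exact key
    set S₁ := Sp A₁ D with hS₁
    set S₂ := Sp A₂ D with hS₂
    have hm₁ : MeasurableSet S₁ := by rw [hS₁, hSp]; exact hmeasS _ _
    have hm₂ : MeasurableSet S₂ := by rw [hS₂, hSp]; exact hmeasS _ _
    have hsubI₁ : S₁ ⊆ Icc (0:ℝ) ξmax := by rw [hS₁, hSp]; exact hsubI _ _
    have hsubI₂ : S₂ ⊆ Icc (0:ℝ) ξmax := by rw [hS₂, hSp]; exact hsubI _ _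
    have hInt₁ : IntegrableOn e S₁ volume := by rw [hS₁, hSp]; exact hIntS _ _
    have hInt₂ : IntegrableOn e S₂ volume := by rw [hS₂, hSp]; exact hIntS _ _
    have hfin₁ : volume S₁ ≠ ⊤ := by rw [hS₁, hSp]; exact hfinS _ _
    have hfin₂ : volume S₂ ≠ ⊤ := by rw [hS₂, hSp]; exact hfinS _ _
    -- the two sets have the same measure
    have hveq : volume S₂ = volume S₁ := by
      rw [hS₁, hS₂, hvol A₁ hA₁, hvol A₂ hA₂]
    have hdiffeq : volume (S₂ \ S₁) = volume (S₁ \ S₂) := by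
      have k₂ : volume (S₂ \ S₁) + volume (S₂ ∩ S₁) = volume S₂ :=
        measure_diff_add_inter S₂ hm₁
      have k₁ : volume (S₁ \ S₂) + volume (S₁ ∩ S₂) = volume S₁ :=
        measure_diff_add_inter S₁ hm₂
      rw [inter_comm] at k₁
      have hinterfin : volume (S₂ ∩ S₁) ≠ ⊤ :=
        (measure_mono inter_subset_right).trans_lt (lt_top_iff_ne_top.mpr hfin₁) |>.ne
      have : volume (S₂ \ S₁) + volume (S₂ ∩ S₁) = volume (S₁ \ S₂) + volume (S₂ ∩ S₁) := by
        rw [k₂, k₁, hveq]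
      exact (ENNReal.add_left_inj hinterfin).mp this
    -- pointwise bounds
    set c := (B A₂ D - B A₁ D) / (A₂ - A₁) with hc
    have hAd : 0 < A₂ - A₁ := sub_pos.mpr hA₁₂
    have hbd21 : ∀ x ∈ S₂ \ S₁, e x ≤ c := by
      rintro x ⟨hx2, hx1⟩
      rw [hS₂, hSp, hS] at hx2
      rw [hS₁, hSp, hS] at hx1
      simp only [mem_setOf_eq, not_and, not_le] at hx1
      have h1 := hx1 hx2.1
      have h2 := hx2.2
      rw [hc, le_div_iff₀ hAd]
      nlinarith
    have hbd12 : ∀ x ∈ S₁ \ S₂, c ≤ e x := by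
      rintro x ⟨hx1, hx2⟩
      rw [hS₁, hSp, hS] at hx1
      rw [hS₂, hSp, hS] at hx2
      simp only [mem_setOf_eq, not_and, not_le] at hx2
      have h1 := hx2 hx1.1
      have h2 := hx1.2
      rw [hc, div_le_iff₀ hAd]
      nlinarith
    -- integral comparison
    have i2 : ∫ x in S₂, e x = (∫ x in S₂ ∩ S₁, e x) + ∫ x in S₂ \ S₁, e x :=
      (integral_inter_add_diff hm₁ hInt₂).symm
    have i1 : ∫ x in S₁, e x = (∫ x in S₁ ∩ S₂, e x) + ∫ x in S₁ \ S₂, e x :=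
      (integral_inter_add_diff hm₂ hInt₁).symm
    have b2 : ∫ x in S₂ \ S₁, e x ≤ c * (volume (S₂ \ S₁)).toReal := by
      calc ∫ x in S₂ \ S₁, e x ≤ ∫ _x in S₂ \ S₁, c :=
            setIntegral_mono_on (hInt₂.mono_set diff_subset)
              (integrableOn_const ((measure_mono diff_subset).trans_lt
                (lt_top_iff_ne_top.mpr hfin₂)).ne)
              (hm₂.diff hm₁) hbd21
        _ = c * (volume (S₂ \ S₁)).toReal := by
            rw [setIntegral_const, smul_eq_mul, mul_comm]; rfl
    have b1 : c * (volume (S₁ \ S₂)).toReal ≤ ∫ x in S₁ \ S₂, e x := by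
      calc c * (volume (S₁ \ S₂)).toReal = ∫ _x in S₁ \ S₂, c := by
            rw [setIntegral_const, smul_eq_mul, mul_comm]; rfl
        _ ≤ ∫ x in S₁ \ S₂, e x :=
            setIntegral_mono_on
              (integrableOn_const ((measure_mono diff_subset).trans_lt
                (lt_top_iff_ne_top.mpr hfin₁)).ne)
              (hInt₁.mono_set diff_subset) (hm₁.diff hm₂) hbd12
    have hint : ∫ x in S₂, e x ≤ ∫ x in S₁, e x := by
      rw [i2, i1, inter_comm S₂ S₁]
      have := hdiffeq ▸ b2
      linarith
    rw [hμe, hμe, hS₂, hS₁] at *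
    exact mul_le_mul_of_nonneg_left hint hκ.le
end

section
/- For the parametric stack specification, every set of active generation units is an interval: let ξ_max > 0, 0 ≤ b̲ < b̄, θ₁ > 2, 0 ≤ e̲ < ē, 0 < θ₂ < 1, and for A ≥ 0 define g(A, ξ) := b̲ + (b̄ − b̲)·(ξ/ξ_max)^{θ₁} + A·(ē − (ē − e̲)·(ξ/ξ_max)^{θ₂}) for ξ ∈ [0, ξ_max]. Then for every A ≥ 0 and every P ∈ ℝ, the sublevel set S(A, P) := {ξ ∈ [0, ξ_max] : g(A, ξ) ≤ P} is either empty or a closed interval [ξ₁, ξ₂] with 0 ≤ ξ₁ ≤ ξ₂ ≤ ξ_max. -/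
open Set

/-- For the parametric stack specification, for every `A ≥ 0` and every `P : ℝ`, the
sublevel set `S(A, P) = {ξ ∈ [0, ξmax] | g(A, ξ) ≤ P}` is either empty or a closed
interval `[ξ₁, ξ₂]` with `0 ≤ ξ₁ ≤ ξ₂ ≤ ξmax`. -/
theorem stmt_14 (ξmax bl bu θ₁ el eu θ₂ : ℝ)
    (hξmax : 0 < ξmax) (hbl : 0 ≤ bl) (hb : bl < bu) (hθ₁ : 2 < θ₁)
    (hel : 0 ≤ el) (he : el < eu) (hθ₂0 : 0 < θ₂) (hθ₂1 : θ₂ < 1) :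
    ∀ A : ℝ, 0 ≤ A → ∀ P : ℝ,
      {ξ ∈ Icc (0:ℝ) ξmax | bl + (bu - bl) * (ξ / ξmax) ^ θ₁ +
          A * (eu - (eu - el) * (ξ / ξmax) ^ θ₂) ≤ P} = ∅ ∨
      ∃ ξ₁ ξ₂ : ℝ, 0 ≤ ξ₁ ∧ ξ₁ ≤ ξ₂ ∧ ξ₂ ≤ ξmax ∧
        {ξ ∈ Icc (0:ℝ) ξmax | bl + (bu - bl) * (ξ / ξmax) ^ θ₁ +
          A * (eu - (eu - el) * (ξ / ξmax) ^ θ₂) ≤ P} = Icc ξ₁ ξ₂ := by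
  intro A hA P
  set F : ℝ → ℝ := fun ξ => bl + (bu - bl) * (ξ / ξmax) ^ θ₁ +
      A * (eu - (eu - el) * (ξ / ξmax) ^ θ₂) with hF
  set S : Set ℝ := {ξ ∈ Icc (0:ℝ) ξmax | F ξ ≤ P} with hS
  rcases eq_empty_or_nonempty S with h | hne
  · exact Or.inl h
  right
  -- convexity of F on Icc 0 ξmax
  have hconv : ConvexOn ℝ (Icc (0:ℝ) ξmax) F := by
    refine ⟨convex_Icc _ _, ?_⟩
    intro x hx y hy a b ha hb hab
    have hx' : (0:ℝ) ≤ x / ξmax := div_nonneg hx.1 hξmax.le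
    have hy' : (0:ℝ) ≤ y / ξmax := div_nonneg hy.1 hξmax.le
    have hkey : (a * x + b * y) / ξmax = a * (x / ξmax) + b * (y / ξmax) := by ring
    have h1 := (convexOn_rpow (by linarith : (1:ℝ) ≤ θ₁)).2 hx' hy' ha hb hab
    have h2 := (Real.concaveOn_rpow hθ₂0.le hθ₂1.le).2 hx' hy' ha hb hab
    simp only [smul_eq_mul] at h1 h2 ⊢
    rw [hF]
    simp only [hkey, smul_eq_mul]
    have hbu : (0:ℝ) ≤ bu - bl := by linarith
    have heu : (0:ℝ) ≤ A * (eu - el) := by nlinarith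
    have habAe : a * (A * eu) + b * (A * eu) = A * eu := by rw [← add_mul, hab, one_mul]
    nlinarith [mul_le_mul_of_nonneg_left h1 hbu, mul_le_mul_of_nonneg_left h2 heu, habAe]
  have hSconv : Convex ℝ S := hconv.convex_le P
  -- continuity of F
  have h1c : Continuous fun ξ : ℝ => (ξ / ξmax) ^ θ₁ :=
    (Real.continuous_rpow_const (by linarith)).comp (continuous_id.div_const ξmax)
  have h2c : Continuous fun ξ : ℝ => (ξ / ξmax) ^ θ₂ :=
    (Real.continuous_rpow_const hθ₂0.le).comp (continuous_id.div_const ξmax)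
  have hcont : Continuous F :=
    (continuous_const.add (continuous_const.mul h1c)).add
      (continuous_const.mul (continuous_const.sub (continuous_const.mul h2c)))
  -- S is compact
  have hSeq : S = Icc (0:ℝ) ξmax ∩ F ⁻¹' Iic P := by
    ext x; simp [hS, Set.mem_sep_iff, and_comm]
  have hSclosed : IsClosed S := by
    rw [hSeq]; exact isClosed_Icc.inter (isClosed_Iic.preimage hcont)
  have hScompact : IsCompact S :=
    isCompact_Icc.of_isClosed_subset hSclosed (fun x hx => hx.1)
  have heq : S = Icc (sInf S) (sSup S) :=
    eq_Icc_of_connected_compact ⟨hne, hSconv.isPreconnected⟩ hScompact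
  have hbddB : BddBelow S := ⟨0, fun x hx => hx.1.1⟩
  have hbddA : BddAbove S := ⟨ξmax, fun x hx => hx.1.2⟩
  obtain ⟨x, hx⟩ := hne
  refine ⟨sInf S, sSup S, le_csInf ⟨x, hx⟩ (fun y hy => hy.1.1),
    le_trans (csInf_le hbddB hx) (le_csSup hbddA hx),
    csSup_le ⟨x, hx⟩ (fun y hy => hy.1.2), heq⟩
end
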